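/- arXiv:2211.03448 — 2 statements merged into one kernel-verified Lean document; each statement's English description precedes it below -/
import Mathlib

section
/- Fix α ∈ (0,2) and set d_k = ⌊2^{2αk/(2−α)}⌋. Let (Ω, F, P) be a probability space carrying a triangular array (X_k(j))_{k∈ℕ, 1≤j≤2d_k} such that for each k the variables X_k(1), …, X_k(2d_k) are i.i.d. SαS(k^{−1/α}), and the rows for distinct k are mutually independent. Define X̂_k(j) = X_k(j)·1[|X_k(j)| ≥ 2^{k²}]. Then n^{−1/α} · Σ_{k=⌊(1/α−1/2)log₂ n⌋+1}^{⌊(1/α)log₂ n⌋} Σ_{j=1}^{n} ( X̂_k(j) − X̂_k(j+d_k) ) → 0 P-almost surely (in particular, in probability) as n → ∞. -/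
open MeasureTheory ProbabilityTheory Filter Topology

/-- `X` is a symmetric `α`-stable random variable with dispersion `σ` on `(Ω, P)`:
its characteristic function is `θ ↦ exp (-σ^α |θ|^α)`. -/
def IsSaS {Ω : Type*} [MeasurableSpace Ω] (P : Measure Ω) (α σ : ℝ) (X : Ω → ℝ) : Prop :=
  ∀ θ : ℝ, ∫ ω, Complex.exp ((θ * X ω : ℝ) * Complex.I) ∂P
    = Complex.exp (-(σ ^ α * |θ| ^ α) : ℝ)

/-- `d_k = ⌊2^(2αk/(2-α))⌋`. -/
noncomputable def dSeq (α : ℝ) (k : ℕ) : ℕ := ⌊(2 : ℝ) ^ (2 * α * k / (2 - α))⌋₊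

open scoped ENNReal

lemma sas_cos {Ω : Type*} [MeasurableSpace Ω] (P : Measure Ω) [IsProbabilityMeasure P]
    {α σ : ℝ} {X : Ω → ℝ} (hX : Measurable X) (h : IsSaS P α σ X) (θ : ℝ) :
    ∫ ω, Real.cos (θ * X ω) ∂P = Real.exp (-(σ ^ α * |θ| ^ α)) := by
  have hm : Measurable fun ω => Complex.exp ((θ * X ω : ℝ) * Complex.I) :=
    (Complex.measurable_exp.comp ((Complex.measurable_ofReal.comp
      ((measurable_const.mul hX))).mul measurable_const))
  have hInt : Integrable (fun ω => Complex.exp ((θ * X ω : ℝ) * Complex.I)) P := by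
    refine Integrable.mono' (integrable_const 1) hm.aestronglyMeasurable ?_
    filter_upwards with ω
    rw [Complex.norm_exp_ofReal_mul_I]
  have h3 := integral_re hInt
  simp only [RCLike.re_to_complex] at h3
  calc ∫ ω, Real.cos (θ * X ω) ∂P
      = ∫ ω, (Complex.exp ((θ * X ω : ℝ) * Complex.I)).re ∂P := by
        simp only [Complex.exp_ofReal_mul_I_re]
    _ = (∫ ω, Complex.exp ((θ * X ω : ℝ) * Complex.I) ∂P).re := h3
    _ = Real.exp (-(σ ^ α * |θ| ^ α)) := by rw [h θ]; exact Complex.exp_ofReal_re _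

lemma sas_tail {Ω : Type*} [MeasurableSpace Ω] (P : Measure Ω) [IsProbabilityMeasure P]
    {α σ : ℝ} (hα0 : 0 < α) (hα2 : α < 2) (hσ : 0 ≤ σ)
    {X : Ω → ℝ} (hX : Measurable X) (h : IsSaS P α σ X)
    {l : ℝ} (hl : 0 < l) :
    P {ω | l ≤ |X ω|} ≤ ENNReal.ofReal (8 * σ ^ α * l ^ (-α)) := by
  set u : ℝ := 2 / l with hu_def
  have hu : 0 < u := by positivity
  set E : Set Ω := {ω | l ≤ |X ω|} with hE_def
  have hEmeas : MeasurableSet E := measurableSet_le measurable_const hX.abs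
  set μ : Measure ℝ := volume.restrict (Set.Ioc 0 u) with hμ
  have hμfin : IsFiniteMeasure μ := by
    constructor
    rw [hμ, Measure.restrict_apply_univ, Real.volume_Ioc]
    exact ENNReal.ofReal_lt_top
  have hfm : Measurable fun p : ℝ × Ω => 1 - Real.cos (p.1 * X p.2) :=
    measurable_const.sub (Real.measurable_cos.comp (measurable_fst.mul (hX.comp measurable_snd)))
  have hfInt : Integrable (fun p : ℝ × Ω => 1 - Real.cos (p.1 * X p.2)) (μ.prod P) := by
    refine Integrable.mono' (integrable_const 2) hfm.aestronglyMeasurable ?_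
    filter_upwards with p
    have h1 := Real.neg_one_le_cos (p.1 * X p.2)
    have h2 := Real.cos_le_one (p.1 * X p.2)
    rw [Real.norm_eq_abs, abs_le]
    constructor <;> nlinarith
  have hswap :
      ∫ θ, (∫ ω, (1 - Real.cos (θ * X ω)) ∂P) ∂μ
        = ∫ ω, (∫ θ, (1 - Real.cos (θ * X ω)) ∂μ) ∂P :=
    integral_integral_swap (f := fun θ ω => 1 - Real.cos (θ * X ω)) hfInt
  have hcosInt : ∀ θ : ℝ, Integrable (fun ω => Real.cos (θ * X ω)) P := by
    intro θ
    refine Integrable.mono' (integrable_const 1)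
      ((Real.measurable_cos.comp (measurable_const.mul hX)).aestronglyMeasurable) ?_
    filter_upwards with ω
    rw [Real.norm_eq_abs]
    exact Real.abs_cos_le_one _
  have hinner : ∀ θ : ℝ, ∫ ω, (1 - Real.cos (θ * X ω)) ∂P
      = 1 - Real.exp (-(σ ^ α * |θ| ^ α)) := by
    intro θ
    rw [integral_sub (integrable_const 1) (hcosInt θ), integral_const, sas_cos P hX h θ]
    simp
  -- upper bound
  have hIle : ∫ θ, (1 - Real.exp (-(σ ^ α * |θ| ^ α))) ∂μ ≤ σ ^ α * u ^ α * u := by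
    have hb : ∀ θ ∈ Set.Ioc (0:ℝ) u, ‖1 - Real.exp (-(σ ^ α * |θ| ^ α))‖ ≤ σ ^ α * u ^ α := by
      intro θ hθ
      have hx0 : (0:ℝ) ≤ σ ^ α * |θ| ^ α := by positivity
      have hexp1 : Real.exp (-(σ ^ α * |θ| ^ α)) ≤ 1 := Real.exp_le_one_iff.mpr (by linarith)
      have hexp2 : 1 - (σ ^ α * |θ| ^ α) ≤ Real.exp (-(σ ^ α * |θ| ^ α)) := by
        have := Real.add_one_le_exp (-(σ ^ α * |θ| ^ α))
        linarith
      have hθu : |θ| ^ α ≤ u ^ α :=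
        Real.rpow_le_rpow (abs_nonneg _) (by rw [abs_of_pos hθ.1]; exact hθ.2) hα0.le
      rw [Real.norm_eq_abs, abs_of_nonneg (by linarith)]
      have : σ ^ α * |θ| ^ α ≤ σ ^ α * u ^ α :=
        mul_le_mul_of_nonneg_left hθu (by positivity)
      linarith
    have := norm_setIntegral_le_of_norm_le_const (μ := volume) (s := Set.Ioc 0 u)
      (f := fun θ => 1 - Real.exp (-(σ ^ α * |θ| ^ α)))
      (by rw [Real.volume_Ioc]; exact ENNReal.ofReal_lt_top) hb
    rw [measureReal_def, Real.volume_Ioc, sub_zero, ENNReal.toReal_ofReal hu.le] at this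
    calc ∫ θ, (1 - Real.exp (-(σ ^ α * |θ| ^ α))) ∂μ
        ≤ |∫ θ, (1 - Real.exp (-(σ ^ α * |θ| ^ α))) ∂μ| := le_abs_self _
      _ ≤ σ ^ α * u ^ α * u := by rw [← Real.norm_eq_abs]; exact this
  -- lower bound
  have hFInt : Integrable (fun ω => ∫ θ, (1 - Real.cos (θ * X ω)) ∂μ) P :=
    hfInt.integral_prod_right
  have hFlow : ∀ ω, E.indicator (fun _ => u / 2) ω ≤ ∫ θ, (1 - Real.cos (θ * X ω)) ∂μ := by
    intro ω
    by_cases hω : ω ∈ E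
    · rw [Set.indicator_of_mem hω]
      set x : ℝ := X ω with hx_def
      have hxl : l ≤ |x| := hω
      have hxne : x ≠ 0 := by
        intro h0
        rw [h0] at hxl
        simp at hxl
        linarith
      have hcalc : ∫ θ, (1 - Real.cos (θ * x)) ∂μ = u - x⁻¹ * (Real.sin (u * x)) := by
        rw [hμ, ← intervalIntegral.integral_of_le hu.le,
          intervalIntegral.integral_sub intervalIntegrable_const
            (by apply Continuous.intervalIntegrable; fun_prop),
          intervalIntegral.integral_const,
          intervalIntegral.integral_comp_mul_right (fun y => Real.cos y) hxne,
          integral_cos]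
        simp [smul_eq_mul]
      rw [hcalc]
      have hsin : x⁻¹ * Real.sin (u * x) ≤ u / 2 := by
        have h1 : x⁻¹ * Real.sin (u * x) ≤ |x⁻¹ * Real.sin (u * x)| := le_abs_self _
        have h2 : |x⁻¹ * Real.sin (u * x)| ≤ |x|⁻¹ * 1 := by
          rw [abs_mul, abs_inv]
          exact mul_le_mul_of_nonneg_left (Real.abs_sin_le_one _) (by positivity)
        have h3 : |x|⁻¹ ≤ l⁻¹ := by
          apply inv_anti₀ hl hxl
        have h4 : l⁻¹ = u / 2 := by rw [hu_def]; field_simp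
        linarith
      linarith
    · rw [Set.indicator_of_notMem hω]
      rw [hμ]
      apply setIntegral_nonneg measurableSet_Ioc
      intro θ _
      have := Real.cos_le_one (θ * X ω)
      linarith
  have hlow : (P E).toReal * (u / 2) ≤ ∫ ω, (∫ θ, (1 - Real.cos (θ * X ω)) ∂μ) ∂P := by
    have hind : ∫ ω, E.indicator (fun _ => u / 2) ω ∂P = (P E).toReal * (u / 2) := by
      rw [integral_indicator_const _ hEmeas, smul_eq_mul, measureReal_def]
    rw [← hind]
    exact integral_mono ((integrable_const _).indicator hEmeas) hFInt hFlow
  -- combine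
  have hmain : (P E).toReal * (u / 2) ≤ σ ^ α * u ^ α * u := by
    calc (P E).toReal * (u / 2) ≤ ∫ ω, (∫ θ, (1 - Real.cos (θ * X ω)) ∂μ) ∂P := hlow
      _ = ∫ θ, (∫ ω, (1 - Real.cos (θ * X ω)) ∂P) ∂μ := hswap.symm
      _ = ∫ θ, (1 - Real.exp (-(σ ^ α * |θ| ^ α))) ∂μ := by
          apply integral_congr_ae
          filter_upwards with θ
          exact hinner θ
      _ ≤ σ ^ α * u ^ α * u := hIle
  have htoReal : (P E).toReal ≤ 8 * σ ^ α * l ^ (-α) := by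
    have h2a : u ^ α = 2 ^ α * l ^ (-α) := by
      rw [hu_def, Real.div_rpow (by norm_num) hl.le, Real.rpow_neg hl.le, div_eq_mul_inv]
    have h2b : (2:ℝ) ^ α ≤ 4 := by
      calc (2:ℝ) ^ α ≤ (2:ℝ) ^ (2:ℝ) :=
            Real.rpow_le_rpow_of_exponent_le one_le_two hα2.le
        _ = 4 := by
            rw [show ((2:ℝ):ℝ) = ((2:ℕ):ℝ) by norm_num, Real.rpow_natCast]
            norm_num
    have hPt : (P E).toReal ≤ 2 * σ ^ α * u ^ α := by
      have := mul_le_mul_of_nonneg_right hmain (le_of_lt (inv_pos.mpr (by positivity : (0:ℝ) < u/2)))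
      rw [mul_inv_cancel_right₀ (by positivity : (u/2) ≠ 0)] at this
      calc (P E).toReal ≤ σ ^ α * u ^ α * u * (u / 2)⁻¹ := this
        _ = 2 * σ ^ α * u ^ α := by field_simp
    calc (P E).toReal ≤ 2 * σ ^ α * u ^ α := hPt
      _ = 2 * (2:ℝ) ^ α * (σ ^ α * l ^ (-α)) := by rw [h2a]; ring
      _ ≤ 2 * 4 * (σ ^ α * l ^ (-α)) := by
          apply mul_le_mul_of_nonneg_right (by linarith) (by positivity)
      _ = 8 * σ ^ α * l ^ (-α) := by ring
  rw [← ENNReal.ofReal_toReal (measure_ne_top P E)]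
  exact ENNReal.ofReal_le_ofReal htoReal

/-- **Large truncations vanish almost surely.**  With `X̂_k(j) = X_k(j)·1[|X_k(j)| ≥ 2^(k²)]`,
`n^{-1/α} ∑_{k=⌊(1/α-1/2)log₂ n⌋+1}^{⌊(1/α)log₂ n⌋} ∑_{j=1}^n (X̂_k(j) - X̂_k(j+d_k)) → 0`
`P`-almost surely as `n → ∞`. -/
theorem middle_scale_large_truncation_vanishes
    {Ω : Type*} [MeasurableSpace Ω] (P : Measure Ω) [IsProbabilityMeasure P]
    (α : ℝ) (hα : α ∈ Set.Ioo (0 : ℝ) 2)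
    (X : ℕ → ℕ → Ω → ℝ)
    (hmeas : ∀ k j, Measurable (X k j))
    (hSaS : ∀ k, 1 ≤ k → ∀ j, 1 ≤ j → j ≤ 2 * dSeq α k →
        IsSaS P α ((k : ℝ) ^ (-(1 / α))) (X k j))
    (hindep : iIndepFun
        (fun p : ℕ × ℕ =>
          if 1 ≤ p.1 ∧ 1 ≤ p.2 ∧ p.2 ≤ 2 * dSeq α p.1 then X p.1 p.2 else fun _ => 0) P) :
    ∀ᵐ ω ∂P, Tendsto (fun n : ℕ =>
        (n : ℝ) ^ (-(1 / α)) *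
          ∑ k ∈ Finset.Icc (⌊(1 / α - 1 / 2) * Real.logb 2 n⌋₊ + 1)
              ⌊(1 / α) * Real.logb 2 n⌋₊,
            ∑ j ∈ Finset.Icc 1 n,
              ((if (2 : ℝ) ^ (k ^ 2) ≤ |X k j ω| then X k j ω else 0)
                - (if (2 : ℝ) ^ (k ^ 2) ≤ |X k (j + dSeq α k) ω|
                    then X k (j + dSeq α k) ω else 0)))
      atTop (𝓝 0) := by
  obtain ⟨hα0, hα2⟩ := hα
  have h2α : (0:ℝ) < 2 - α := by linarith
  set s : ℕ → Set Ω := fun k =>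
    ⋃ j ∈ Finset.Icc 1 (2 * dSeq α k), {ω | (2:ℝ) ^ (k ^ 2) ≤ |X k j ω|} with hs_def
  -- per-variable tail bound for k ≥ 1
  have htail : ∀ k, 1 ≤ k → ∀ j ∈ Finset.Icc 1 (2 * dSeq α k),
      P {ω | (2:ℝ) ^ (k ^ 2) ≤ |X k j ω|} ≤ ENNReal.ofReal
        (8 * (k:ℝ)⁻¹ * (2:ℝ) ^ (-(α * (k:ℝ) ^ 2))) := by
    intro k hk j hj
    rw [Finset.mem_Icc] at hj
    have h1 := hSaS k hk j hj.1 hj.2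
    have hl : (0:ℝ) < 2 ^ (k ^ 2) := by positivity
    have hbound := sas_tail P hα0 hα2 (Real.rpow_nonneg (Nat.cast_nonneg k) _)
      (hmeas k j) h1 hl
    have hσα : (((k:ℝ) ^ (-(1/α))) : ℝ) ^ α = (k:ℝ)⁻¹ := by
      rw [← Real.rpow_mul (Nat.cast_nonneg k)]
      have : (-(1/α)) * α = -1 := by field_simp
      rw [this, Real.rpow_neg_one]
    have hlα : (((2:ℝ) ^ (k ^ 2)) : ℝ) ^ (-α) = (2:ℝ) ^ (-(α * (k:ℝ) ^ 2)) := by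
      rw [← Real.rpow_natCast 2 (k ^ 2), ← Real.rpow_mul (by norm_num : (0:ℝ) ≤ 2)]
      congr 1
      push_cast
      ring
    rwa [hσα, hlα] at hbound
  -- bound on the union events
  set C : ℕ → ℝ := fun k => if k = 0 then 1 else
    ((2 * dSeq α k : ℕ) : ℝ) * (8 * (k:ℝ)⁻¹ * (2:ℝ) ^ (-(α * (k:ℝ) ^ 2))) with hC_def
  have hC0 : ∀ k, 0 ≤ C k := by
    intro k
    rw [hC_def]
    by_cases hk : k = 0
    · simp [hk]
    · simp only [hk, if_false]
      positivity
  have hsk : ∀ k, P (s k) ≤ ENNReal.ofReal (C k) := by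
    intro k
    by_cases hk : k = 0
    · rw [hC_def]
      simp only [hk, ite_true, ENNReal.ofReal_one]
      exact prob_le_one (μ := P)
    · have hk1 : 1 ≤ k := Nat.one_le_iff_ne_zero.mpr hk
      calc P (s k) ≤ ∑ j ∈ Finset.Icc 1 (2 * dSeq α k),
            P {ω | (2:ℝ) ^ (k ^ 2) ≤ |X k j ω|} := measure_biUnion_finset_le _ _
        _ ≤ ∑ j ∈ Finset.Icc 1 (2 * dSeq α k),
            ENNReal.ofReal (8 * (k:ℝ)⁻¹ * (2:ℝ) ^ (-(α * (k:ℝ) ^ 2))) :=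
            Finset.sum_le_sum (htail k hk1)
        _ = (2 * dSeq α k) •
            ENNReal.ofReal (8 * (k:ℝ)⁻¹ * (2:ℝ) ^ (-(α * (k:ℝ) ^ 2))) := by
            rw [Finset.sum_const, Nat.card_Icc]
            norm_num
        _ = ENNReal.ofReal (C k) := by
            rw [hC_def]
            simp only [hk, if_false]
            rw [nsmul_eq_mul, ← ENNReal.ofReal_natCast (2 * dSeq α k),
              ← ENNReal.ofReal_mul (Nat.cast_nonneg _)]
  -- summability
  set B : ℕ → ℝ := fun k =>
    16 * (2:ℝ) ^ (2 * α * k / (2 - α) - α * (k:ℝ) ^ 2) with hB_def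
  have hBpos : ∀ k, 0 < B k := by
    intro k
    rw [hB_def]
    positivity
  have hCB : ∀ k, C k ≤ B k := by
    intro k
    rw [hC_def, hB_def]
    by_cases hk : k = 0
    · subst hk
      have h0 : (2:ℝ) * α * ((0:ℕ):ℝ) / (2 - α) - α * ((0:ℕ):ℝ) ^ 2 = 0 := by
        push_cast; ring
      simp only [if_pos rfl, h0, Real.rpow_zero]
      norm_num
    · simp only [hk, if_false]
      have hk1 : (1:ℝ) ≤ (k:ℝ) := by
        have : 1 ≤ k := Nat.one_le_iff_ne_zero.mpr hk
        exact_mod_cast this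
      have hd : ((dSeq α k : ℕ) : ℝ) ≤ (2:ℝ) ^ (2 * α * k / (2 - α)) := by
        rw [dSeq]
        exact Nat.floor_le (Real.rpow_nonneg (by norm_num) _)
      have hki : (k:ℝ)⁻¹ ≤ 1 := by
        rw [inv_le_one_iff₀]
        right
        exact hk1
      have hstep : ((2 * dSeq α k : ℕ) : ℝ) * (8 * (k:ℝ)⁻¹ * (2:ℝ) ^ (-(α * (k:ℝ) ^ 2)))
          ≤ (2 * (2:ℝ) ^ (2 * α * k / (2 - α))) * (8 * 1 * (2:ℝ) ^ (-(α * (k:ℝ) ^ 2))) := by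
        apply mul_le_mul
        · push_cast
          linarith
        · apply mul_le_mul_of_nonneg_right _ (Real.rpow_nonneg (by norm_num) _)
          apply mul_le_mul_of_nonneg_left hki (by norm_num)
        · positivity
        · positivity
      calc ((2 * dSeq α k : ℕ) : ℝ) * (8 * (k:ℝ)⁻¹ * (2:ℝ) ^ (-(α * (k:ℝ) ^ 2)))
          ≤ (2 * (2:ℝ) ^ (2 * α * k / (2 - α))) * (8 * 1 * (2:ℝ) ^ (-(α * (k:ℝ) ^ 2))) := hstep
        _ = 16 * (2:ℝ) ^ (2 * α * k / (2 - α) - α * (k:ℝ) ^ 2) := by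
            rw [show 2 * α * (k:ℝ) / (2 - α) - α * (k:ℝ) ^ 2
              = 2 * α * (k:ℝ) / (2 - α) + (-(α * (k:ℝ) ^ 2)) by ring,
              Real.rpow_add (by norm_num : (0:ℝ) < 2)]
            ring
  have hB : Summable B := by
    apply summable_of_ratio_norm_eventually_le
      (r := (2:ℝ) ^ (-α)) (Real.rpow_lt_one_of_one_lt_of_neg one_lt_two (by linarith))
    filter_upwards [eventually_ge_atTop ⌈1 / (2 - α)⌉₊] with k hk
    have hk' : 1 / (2 - α) ≤ (k:ℝ) := (Nat.ceil_le.mp hk)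
    rw [Real.norm_eq_abs, Real.norm_eq_abs, abs_of_pos (hBpos _), abs_of_pos (hBpos _)]
    rw [hB_def]
    have hexp : 2 * α * ((k:ℕ)+1 : ℕ) / (2 - α) - α * (((k:ℕ)+1 : ℕ):ℝ) ^ 2
        = (2 * α * k / (2 - α) - α * (k:ℝ) ^ 2) + (2 * α / (2 - α) - α * (2 * k + 1)) := by
      push_cast
      field_simp
      ring
    have hΔ : 2 * α / (2 - α) - α * (2 * (k:ℝ) + 1) ≤ -α := by
      have h1 : 1 ≤ (k:ℝ) * (2 - α) := by
        rw [div_le_iff₀ h2α] at hk'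
        linarith
      have h2 : 2 * α / (2 - α) ≤ 2 * α * (k:ℝ) := by
        rw [div_le_iff₀ h2α]
        nlinarith
      nlinarith
    calc 16 * (2:ℝ) ^ (2 * α * ((k:ℕ)+1 : ℕ) / (2 - α) - α * (((k:ℕ)+1 : ℕ):ℝ) ^ 2)
        = 16 * ((2:ℝ) ^ (2 * α * k / (2 - α) - α * (k:ℝ) ^ 2)
            * (2:ℝ) ^ (2 * α / (2 - α) - α * (2 * (k:ℝ) + 1))) := by
          rw [hexp, Real.rpow_add (by norm_num : (0:ℝ) < 2)]
          try push_cast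
          try ring_nf
      _ ≤ 16 * ((2:ℝ) ^ (2 * α * k / (2 - α) - α * (k:ℝ) ^ 2) * (2:ℝ) ^ (-α)) := by
          apply mul_le_mul_of_nonneg_left _ (by norm_num)
          apply mul_le_mul_of_nonneg_left _ (Real.rpow_nonneg (by norm_num) _)
          exact Real.rpow_le_rpow_of_exponent_le one_le_two hΔ
      _ = (2:ℝ) ^ (-α) * (16 * (2:ℝ) ^ (2 * α * k / (2 - α) - α * (k:ℝ) ^ 2)) := by ring
  have hC : Summable C := Summable.of_nonneg_of_le hC0 hCB hB
  have htsum : (∑' k, P (s k)) ≠ ∞ := by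
    apply ne_top_of_le_ne_top _ (ENNReal.tsum_le_tsum hsk)
    rw [← ENNReal.ofReal_tsum_of_nonneg hC0 hC]
    exact ENNReal.ofReal_ne_top
  -- floor tendsto
  have hcoef : (0:ℝ) < 1 / α - 1 / 2 := by
    have := one_div_lt_one_div_of_lt hα0 hα2
    linarith
  have hfloor : Tendsto (fun n : ℕ => ⌊(1 / α - 1 / 2) * Real.logb 2 n⌋₊) atTop atTop := by
    apply tendsto_nat_floor_atTop.comp
    apply Tendsto.const_mul_atTop hcoef
    exact (Real.tendsto_logb_atTop one_lt_two).comp tendsto_natCast_atTop_atTop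
  filter_upwards [MeasureTheory.ae_eventually_notMem htsum] with ω hω
  rw [Filter.eventually_atTop] at hω
  obtain ⟨K, hK⟩ := hω
  apply Tendsto.congr' _ (tendsto_const_nhds (x := (0:ℝ)))
  have hev1 : ∀ᶠ n : ℕ in atTop, K ≤ ⌊(1 / α - 1 / 2) * Real.logb 2 n⌋₊ :=
    hfloor.eventually_ge_atTop K
  filter_upwards [hev1, eventually_ge_atTop 1] with n hnK hn1
  symm
  apply mul_eq_zero_of_right
  apply Finset.sum_eq_zero
  intro k hk
  rw [Finset.mem_Icc] at hk
  have hkK : K ≤ k := le_trans (le_trans hnK (Nat.le_succ _)) hk.1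
  have hωk : ω ∉ s k := hK k hkK
  -- n ≤ dSeq α k
  have hklow : (1 / α - 1 / 2) * Real.logb 2 n < (k:ℝ) := by
    have h1 : (1 / α - 1 / 2) * Real.logb 2 n
        < (⌊(1 / α - 1 / 2) * Real.logb 2 n⌋₊ : ℝ) + 1 := Nat.lt_floor_add_one _
    have h2 : ((⌊(1 / α - 1 / 2) * Real.logb 2 n⌋₊ : ℕ) : ℝ) + 1 ≤ (k:ℝ) := by
      exact_mod_cast hk.1
    linarith
  have hnd : n ≤ dSeq α k := by
    have hL0 : 0 ≤ Real.logb 2 n := Real.logb_nonneg one_lt_two (by exact_mod_cast hn1)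
    have hlogn : Real.logb 2 n ≤ 2 * α * k / (2 - α) := by
      have hc : 1 / α - 1 / 2 = (2 - α) / (2 * α) := by
        rw [div_sub_div _ _ (ne_of_gt hα0) (by norm_num : (2:ℝ) ≠ 0)]
        congr 1 <;> ring
      rw [hc] at hklow
      rw [le_div_iff₀ h2α]
      rw [div_mul_eq_mul_div, div_lt_iff₀ (by positivity : (0:ℝ) < 2 * α)] at hklow
      nlinarith
    have hn2 : (n:ℝ) ≤ (2:ℝ) ^ (2 * α * k / (2 - α)) := by
      calc (n:ℝ) = (2:ℝ) ^ (Real.logb 2 n) :=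
            (Real.rpow_logb two_pos (by norm_num) (by exact_mod_cast hn1)).symm
        _ ≤ (2:ℝ) ^ (2 * α * k / (2 - α)) :=
            Real.rpow_le_rpow_of_exponent_le one_le_two hlogn
    rw [dSeq]
    exact Nat.le_floor hn2
  have hnot : ∀ j, 1 ≤ j → j ≤ 2 * dSeq α k → ¬ ((2:ℝ) ^ (k ^ 2) ≤ |X k j ω|) := by
    intro j hj1 hj2 hcon
    apply hωk
    rw [hs_def]
    exact Set.mem_iUnion₂.mpr ⟨j, Finset.mem_Icc.mpr ⟨hj1, hj2⟩, hcon⟩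
  apply Finset.sum_eq_zero
  intro j hj
  rw [Finset.mem_Icc] at hj
  rw [if_neg (hnot j hj.1 (by omega)), if_neg (hnot (j + dSeq α k) (by omega) (by omega)),
    sub_zero]
end

section
/- Let α ∈ (0,2). There exists a constant c = c(α) > 0 such that for all K ≥ 1 and all σ with 0 < σ ≤ 1, if X is an SαS(σ) random variable, then Var( X·1[|X| ≤ K] ) ≤ c · K^{2−α} · σ^{α}. -/
open MeasureTheory ProbabilityTheory Filter Topology

/-- **Variance of a truncated symmetric stable variable.**  For `α ∈ (0,2)` there is
`c = c(α) > 0` such that for all `K ≥ 1`, `0 < σ ≤ 1` and `X` an `SαS(σ)` random variable,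
`Var(X · 1[|X| ≤ K]) ≤ c · K^(2-α) · σ^α`. -/
theorem sas_truncated_variance_bound (α : ℝ) (hα : α ∈ Set.Ioo (0 : ℝ) 2) :
    ∃ c : ℝ, 0 < c ∧
      ∀ (Ω : Type) [MeasurableSpace Ω] (P : Measure Ω) [IsProbabilityMeasure P]
        (K σ : ℝ), 1 ≤ K → 0 < σ → σ ≤ 1 →
        ∀ X : Ω → ℝ, Measurable X → IsSaS P α σ X →
          variance (fun ω => if |X ω| ≤ K then X ω else 0) P ≤ c * K ^ (2 - α) * σ ^ α := by
  obtain ⟨hα0, hα2⟩ := hα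
  refine ⟨Real.pi ^ 2 / 2, by positivity, ?_⟩
  intro Ω _ P _ K σ hK hσ hσ1 X hX hsas
  have hK0 : (0:ℝ) < K := lt_of_lt_of_le one_pos hK
  set Y : Ω → ℝ := fun ω => if |X ω| ≤ K then X ω else 0 with hYdef
  have hYmeas : Measurable Y :=
    Measurable.ite (measurableSet_le hX.abs measurable_const) hX measurable_const
  have hYbd : ∀ ω, |Y ω| ≤ K := by
    intro ω
    by_cases h : |X ω| ≤ K <;> simp [hYdef, h, hK0.le, abs_of_nonneg]
  -- integrability facts
  have hcosmeas : Measurable fun ω => 1 - Real.cos (K⁻¹ * X ω) :=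
    (measurable_const.sub ((Real.measurable_cos.comp (measurable_const.mul hX))))
  have hcosint : Integrable (fun ω => 1 - Real.cos (K⁻¹ * X ω)) P := by
    refine ⟨hcosmeas.aestronglyMeasurable, ?_⟩
    apply HasFiniteIntegral.of_bounded (C := 2)
    filter_upwards with ω
    rw [Real.norm_eq_abs, abs_le]
    constructor <;> nlinarith [Real.cos_le_one (K⁻¹ * X ω), Real.neg_one_le_cos (K⁻¹ * X ω)]
  have _ := hcosint
  have hY2int : Integrable (fun ω => (Y ω)^2) P := by
    refine ⟨(hYmeas.pow_const 2).aestronglyMeasurable, ?_⟩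
    apply HasFiniteIntegral.of_bounded (C := K^2)
    filter_upwards with ω
    rw [Real.norm_eq_abs, abs_of_nonneg (sq_nonneg _)]
    calc (Y ω)^2 = |Y ω|^2 := (sq_abs _).symm
    _ ≤ K^2 := by nlinarith [hYbd ω, abs_nonneg (Y ω)]
  -- pointwise bound
  have hpt : ∀ ω, 2 / Real.pi ^ 2 * (K⁻¹)^2 * (Y ω)^2 ≤ 1 - Real.cos (K⁻¹ * X ω) := by
    intro ω
    have hcos1 : Real.cos (K⁻¹ * X ω) ≤ 1 := Real.cos_le_one _
    by_cases h : |X ω| ≤ K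
    · have habs : |K⁻¹ * X ω| ≤ Real.pi := by
        rw [abs_mul, abs_of_nonneg (inv_nonneg.2 hK0.le)]
        calc K⁻¹ * |X ω| ≤ K⁻¹ * K := by
              exact mul_le_mul_of_nonneg_left h (inv_nonneg.2 hK0.le)
        _ = 1 := inv_mul_cancel₀ hK0.ne'
        _ ≤ Real.pi := by linarith [Real.pi_gt_three]
      have := Real.cos_le_one_sub_mul_cos_sq habs
      have hYX : Y ω = X ω := if_pos h
      rw [hYX]
      nlinarith [sq_nonneg (X ω), Real.pi_pos]
    · have hY0 : Y ω = 0 := if_neg h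
      rw [hY0]
      simp only [mul_zero, ne_eq, OfNat.ofNat_ne_zero, not_false_eq_true, zero_pow]
      nlinarith
  -- integral of RHS from characteristic function
  have hchar := hsas K⁻¹
  have hint_exp : Integrable (fun ω => Complex.exp ((K⁻¹ * X ω : ℝ) * Complex.I)) P := by
    refine ⟨?_, ?_⟩
    · apply Measurable.aestronglyMeasurable
      exact Complex.measurable_exp.comp
        ((Complex.measurable_ofReal.comp (measurable_const.mul hX)).mul measurable_const)
    · apply HasFiniteIntegral.of_bounded (C := 1)
      filter_upwards with ω
      rw [Complex.norm_exp]
      simp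
  have hcosint' : ∫ ω, Real.cos (K⁻¹ * X ω) ∂P = Real.exp (-(σ ^ α * |K⁻¹| ^ α)) := by
    have h1 : (∫ ω, Complex.exp ((K⁻¹ * X ω : ℝ) * Complex.I) ∂P).re
        = Real.exp (-(σ ^ α * |K⁻¹| ^ α)) := by
      rw [hchar, Complex.exp_ofReal_re]
    rw [← h1, ← RCLike.re_to_complex, ← integral_re hint_exp]
    congr 1
    ext ω
    rw [RCLike.re_to_complex, Complex.exp_ofReal_mul_I_re]
  have hcos_integ : Integrable (fun ω => Real.cos (K⁻¹ * X ω)) P := by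
    refine ⟨(Real.measurable_cos.comp (measurable_const.mul hX)).aestronglyMeasurable, ?_⟩
    apply HasFiniteIntegral.of_bounded (C := 1)
    filter_upwards with ω
    rw [Real.norm_eq_abs]; exact Real.abs_cos_le_one _
  have hint1 : ∫ ω, (1 - Real.cos (K⁻¹ * X ω)) ∂P = 1 - Real.exp (-(σ ^ α * |K⁻¹| ^ α)) := by
    rw [integral_sub (integrable_const 1) hcos_integ, integral_const, hcosint']
    simp
  have step1 : variance Y P ≤ ∫ ω, (Y ω)^2 ∂P := by
    have h := variance_le_expectation_sq (μ := P) hYmeas.aestronglyMeasurable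
    simpa [Pi.pow_apply] using h
  have step2 : 2 / Real.pi ^ 2 * (K⁻¹)^2 * ∫ ω, (Y ω)^2 ∂P
      ≤ 1 - Real.exp (-(σ ^ α * |K⁻¹| ^ α)) := by
    rw [← hint1, ← integral_const_mul]
    exact integral_mono (hY2int.const_mul _) hcosint (fun ω => hpt ω)
  have hexp : 1 - Real.exp (-(σ ^ α * |K⁻¹| ^ α)) ≤ σ ^ α * |K⁻¹| ^ α := by
    linarith [Real.add_one_le_exp (-(σ ^ α * |K⁻¹| ^ α))]
  have habsK : |K⁻¹| ^ α = K ^ (-α) := by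
    rw [abs_of_pos (inv_pos.2 hK0), Real.inv_rpow hK0.le, ← Real.rpow_neg hK0.le]
  have hKpow : (K:ℝ)^(2:ℕ) * K ^ (-α) = K ^ (2-α) := by
    rw [← Real.rpow_natCast K 2, ← Real.rpow_add hK0]
    norm_num [sub_eq_add_neg]
  have hmid : ∫ ω, (Y ω)^2 ∂P ≤ Real.pi^2/2 * K^(2:ℕ) * (σ ^ α * |K⁻¹| ^ α) := by
    have hpi := Real.pi_pos
    have hKK : K⁻¹ * K = 1 := inv_mul_cancel₀ hK0.ne'
    have hid : Real.pi^2/2 * K^(2:ℕ) * (2 / Real.pi ^ 2 * (K⁻¹)^2 * ∫ ω, (Y ω)^2 ∂P)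
        = ∫ ω, (Y ω)^2 ∂P := by
      field_simp
    calc ∫ ω, (Y ω)^2 ∂P
        = Real.pi^2/2 * K^(2:ℕ) * (2 / Real.pi ^ 2 * (K⁻¹)^2 * ∫ ω, (Y ω)^2 ∂P) := hid.symm
      _ ≤ Real.pi^2/2 * K^(2:ℕ) * (σ ^ α * |K⁻¹| ^ α) := by
          apply mul_le_mul_of_nonneg_left (step2.trans hexp)
          positivity
  calc variance Y P ≤ ∫ ω, (Y ω)^2 ∂P := step1
  _ ≤ Real.pi^2/2 * K^(2:ℕ) * (σ ^ α * |K⁻¹| ^ α) := hmid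
  _ = Real.pi^2/2 * (K^(2:ℕ) * K ^ (-α)) * σ ^ α := by rw [habsK]; ring
  _ = Real.pi^2/2 * K^(2-α) * σ ^ α := by rw [hKpow]
end
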